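/- Let ρ be an N×N density matrix. Then the following are equivalent: (1) for all permutations π_l, π_r ∈ S_m, ρ = sign(π_l)·sign(π_r)·(1/2)(P_{π_r} ρ P_{π_l}† + P_{π_l} ρ P_{π_r}†); (2) ρ = Π_Anti ρ Π_Anti. -/

import Mathlib

open Matrix ComplexOrder

/-- The permutation matrix `P_π` on the `m`-fold tensor power of `ℂ^n`, indexing
coordinates by functions `f : Fin m → Fin n`, with entries
`(P_π)_{f,g} = 1` if `g = f ∘ π⁻¹` and `0` otherwise. -/
def permMat (n m : ℕ) (π : Equiv.Perm (Fin m)) :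
    Matrix (Fin m → Fin n) (Fin m → Fin n) ℂ :=
  Matrix.of fun f g => if g = f ∘ π.symm then 1 else 0

/-- The antisymmetriser `Π_Anti = (1/m!) Σ_π sign(π) • P_π`. -/
noncomputable def antisymmetriser (n m : ℕ) :
    Matrix (Fin m → Fin n) (Fin m → Fin n) ℂ :=
  (m.factorial : ℂ)⁻¹ •
    ∑ π : Equiv.Perm (Fin m), ((Equiv.Perm.sign π : ℤ) : ℂ) • permMat n m π

/-! ### Auxiliary material -/

/-- The sign of a permutation, as a complex number. -/
noncomputable def cC {m : ℕ} (π : Equiv.Perm (Fin m)) : ℂ :=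
  ((Equiv.Perm.sign π : ℤ) : ℂ)

lemma cC_one_or {m : ℕ} (π : Equiv.Perm (Fin m)) : cC π = 1 ∨ cC π = -1 := by
  rcases Int.units_eq_one_or (Equiv.Perm.sign π) with h | h <;>
    simp [cC, h]

lemma cC_sq {m : ℕ} (π : Equiv.Perm (Fin m)) : cC π * cC π = 1 := by
  rcases cC_one_or π with h | h <;> simp [h]

lemma cC_mul {m : ℕ} (π σ : Equiv.Perm (Fin m)) : cC (π * σ) = cC π * cC σ := by
  simp [cC, Equiv.Perm.sign_mul]

lemma cC_inv {m : ℕ} (π : Equiv.Perm (Fin m)) : cC π⁻¹ = cC π := by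
  simp [cC]

/-- The (unnormalised) antisymmetriser sum. -/
noncomputable def Ssum (n m : ℕ) : Matrix (Fin m → Fin n) (Fin m → Fin n) ℂ :=
  ∑ π : Equiv.Perm (Fin m), cC π • permMat n m π

lemma antisymmetriser_eq (n m : ℕ) :
    antisymmetriser n m = (m.factorial : ℂ)⁻¹ • Ssum n m := rfl

lemma permMat_one (n m : ℕ) : permMat n m 1 = 1 := by
  ext f g
  simp [permMat, Matrix.one_apply, eq_comm, Equiv.Perm.one_symm]

lemma permMat_mul (n m : ℕ) (π σ : Equiv.Perm (Fin m)) :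
    permMat n m π * permMat n m σ = permMat n m (σ * π) := by
  ext f h
  simp only [Matrix.mul_apply, permMat, Matrix.of_apply]
  rw [Finset.sum_eq_single (f ∘ ⇑π.symm)]
  · rw [if_pos rfl, one_mul]
    have hc : (f ∘ ⇑π.symm) ∘ ⇑σ.symm = f ∘ ⇑(σ * π).symm := by
      ext x; simp [Equiv.Perm.mul_def]
    rw [hc]
  · intro g _ hg
    rw [if_neg hg, zero_mul]
  · intro hf
    exact absurd (Finset.mem_univ _) hf

lemma permMat_conjTranspose (n m : ℕ) (π : Equiv.Perm (Fin m)) :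
    (permMat n m π)ᴴ = permMat n m π⁻¹ := by
  ext f g
  simp only [Matrix.conjTranspose_apply, permMat, Matrix.of_apply]
  have hiff : (f = g ∘ ⇑π.symm) ↔ (g = f ∘ ⇑π⁻¹.symm) := by
    constructor
    · intro h; subst h; ext x; simp [Equiv.Perm.inv_def]
    · intro h; subst h; ext x; simp [Equiv.Perm.inv_def]
  simp only [hiff]
  split_ifs <;> simp

lemma permMat_mul_Ssum (n m : ℕ) (σ : Equiv.Perm (Fin m)) :
    permMat n m σ * Ssum n m = cC σ • Ssum n m := by
  unfold Ssum
  rw [Finset.mul_sum, Finset.smul_sum]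
  simp_rw [Matrix.mul_smul, permMat_mul]
  refine Fintype.sum_equiv (Equiv.mulRight σ) _ _ fun π => ?_
  simp only [Equiv.coe_mulRight, smul_smul]
  congr 1
  rw [cC_mul, mul_comm (cC π) (cC σ), ← mul_assoc, cC_sq, one_mul]

lemma Ssum_mul_permMat (n m : ℕ) (σ : Equiv.Perm (Fin m)) :
    Ssum n m * permMat n m σ = cC σ • Ssum n m := by
  unfold Ssum
  rw [Finset.sum_mul, Finset.smul_sum]
  simp_rw [Matrix.smul_mul, permMat_mul]
  refine Fintype.sum_equiv (Equiv.mulLeft σ) _ _ fun π => ?_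
  simp only [Equiv.coe_mulLeft, smul_smul]
  congr 1
  rw [cC_mul, ← mul_assoc, cC_sq, one_mul]

lemma Ssum_conj_sum (n m : ℕ) :
    ∑ π : Equiv.Perm (Fin m), cC π • (permMat n m π)ᴴ = Ssum n m := by
  simp_rw [permMat_conjTranspose]
  unfold Ssum
  refine Fintype.sum_equiv (Equiv.inv (Equiv.Perm (Fin m))) _ _ fun π => ?_
  simp [cC_inv]

lemma Ssum_mul_Ssum (n m : ℕ) :
    Ssum n m * Ssum n m = (m.factorial : ℂ) • Ssum n m := by
  have h1 : ∀ Y, Ssum n m * Y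
      = ∑ π : Equiv.Perm (Fin m), cC π • (permMat n m π * Y) := fun Y => by
    rw [show Ssum n m = ∑ π : Equiv.Perm (Fin m), cC π • permMat n m π from rfl,
      Finset.sum_mul]
    simp_rw [Matrix.smul_mul]
  rw [h1]
  simp_rw [permMat_mul_Ssum, smul_smul, cC_sq, one_smul, Finset.sum_const,
    Finset.card_univ, Fintype.card_perm, Fintype.card_fin]
  rw [Nat.cast_smul_eq_nsmul]

lemma permMat_mul_anti (n m : ℕ) (σ : Equiv.Perm (Fin m)) :
    permMat n m σ * antisymmetriser n m = cC σ • antisymmetriser n m := by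
  rw [antisymmetriser_eq, Matrix.mul_smul, permMat_mul_Ssum, smul_comm]

lemma anti_mul_permMat (n m : ℕ) (σ : Equiv.Perm (Fin m)) :
    antisymmetriser n m * permMat n m σ = cC σ • antisymmetriser n m := by
  rw [antisymmetriser_eq, Matrix.smul_mul, Ssum_mul_permMat, smul_comm]

/-- A density matrix `ρ` satisfies `ρ = sign(π_l)·sign(π_r)·(1/2)(P_r ρ P_l† + P_l ρ P_r†)`
for all `π_l, π_r ∈ S_m` iff `ρ = Π_Anti ρ Π_Anti`. -/
theorem density_anti_exchangeable_iff (n m : ℕ) (hn : 1 ≤ n) (hm : 1 ≤ m)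
    (ρ : Matrix (Fin m → Fin n) (Fin m → Fin n) ℂ)
    (hρ : ρ.PosSemidef) (htr : ρ.trace = 1) :
    (∀ πl πr : Equiv.Perm (Fin m),
        ρ = (((Equiv.Perm.sign πl : ℤ) : ℂ) * ((Equiv.Perm.sign πr : ℤ) : ℂ)) •
          ((2 : ℂ)⁻¹ •
            (permMat n m πr * ρ * (permMat n m πl)ᴴ +
              permMat n m πl * ρ * (permMat n m πr)ᴴ))) ↔
      ρ = antisymmetriser n m * ρ * antisymmetriser n m := by
  constructor
  · intro h
    set k : ℂ := (m.factorial : ℂ) with hk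
    have hk0 : k ≠ 0 := Nat.cast_ne_zero.mpr m.factorial_ne_zero
    set S := Ssum n m with hS
    have h2 : ∀ r : Equiv.Perm (Fin m),
        ρ = cC r • ((2 : ℂ)⁻¹ • (permMat n m r * ρ + ρ * (permMat n m r)ᴴ)) := by
      intro r
      have h1r := h 1 r
      simpa [permMat_one, cC] using h1r
    have hsum : k • ρ = (2 : ℂ)⁻¹ • (S * ρ + ρ * S) := by
      have e : ∑ _r : Equiv.Perm (Fin m), ρ
          = ∑ r : Equiv.Perm (Fin m),
              cC r • ((2 : ℂ)⁻¹ • (permMat n m r * ρ + ρ * (permMat n m r)ᴴ)) :=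
        Finset.sum_congr rfl fun r _ => h2 r
      rw [Finset.sum_const, Finset.card_univ, Fintype.card_perm, Fintype.card_fin,
        ← Nat.cast_smul_eq_nsmul ℂ] at e
      rw [hk, e]
      simp_rw [smul_comm (cC _) ((2 : ℂ)⁻¹), smul_add]
      rw [Finset.sum_add_distrib]
      congr 1
      · rw [← Finset.smul_sum]
        congr 1
        rw [hS, show Ssum n m = ∑ π : Equiv.Perm (Fin m), cC π • permMat n m π from rfl,
          Finset.sum_mul]
        simp_rw [Matrix.smul_mul]
      · rw [← Finset.smul_sum]
        congr 1
        rw [hS, ← Ssum_conj_sum n m, Finset.mul_sum]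
        simp_rw [Matrix.mul_smul]
    have e1 : ((2 : ℂ) * k) • ρ = S * ρ + ρ * S := by
      calc ((2 : ℂ) * k) • ρ = (2 : ℂ) • (k • ρ) := by rw [smul_smul]
        _ = (2 : ℂ) • ((2 : ℂ)⁻¹ • (S * ρ + ρ * S)) := by rw [hsum]
        _ = S * ρ + ρ * S := by rw [smul_smul]; norm_num
    have e2 : S * ρ * S = k • (S * ρ) := by
      have t := congrArg (fun M => S * M) e1
      simp only [Matrix.mul_smul, Matrix.mul_add, ← Matrix.mul_assoc] at t
      rw [hS, Ssum_mul_Ssum, ← hk, Matrix.smul_mul, ← hS] at t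
      have t2 : S * ρ * S + k • (S * ρ) = ((2 : ℂ) * k) • (S * ρ) := by
        rw [add_comm]; exact t.symm
      have t3 := eq_sub_of_add_eq t2
      rw [t3, ← sub_smul]
      congr 1
      ring
    have e3 : S * ρ * S = k • (ρ * S) := by
      have t := congrArg (fun M => M * S) e1
      simp only [Matrix.smul_mul, Matrix.add_mul] at t
      rw [Matrix.mul_assoc ρ S S, hS, Ssum_mul_Ssum, ← hk, Matrix.mul_smul, ← hS] at t
      have t2 : S * ρ * S + k • (ρ * S) = ((2 : ℂ) * k) • (ρ * S) := t.symm
      have t3 := eq_sub_of_add_eq t2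
      rw [t3, ← sub_smul]
      congr 1
      ring
    have comm : S * ρ = ρ * S := smul_right_injective _ hk0 (e2.symm.trans e3)
    have hkρ : k • ρ = S * ρ := by
      have : (2 : ℂ) • (k • ρ) = (2 : ℂ) • (S * ρ) := by
        rw [smul_smul, e1, ← comm, two_smul]
      exact smul_right_injective _ (by norm_num : (2 : ℂ) ≠ 0) this
    have hA : antisymmetriser n m * ρ * antisymmetriser n m
        = (k⁻¹ * k⁻¹) • (S * ρ * S) := by
      rw [antisymmetriser_eq, ← hk, ← hS, Matrix.smul_mul, Matrix.smul_mul,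
        Matrix.mul_smul, smul_smul]
    rw [hA, e2, ← hkρ, smul_smul, smul_smul]
    have hone : k⁻¹ * k⁻¹ * k * k = 1 := by field_simp
    rw [hone, one_smul]
  · intro h πl πr
    have key : ∀ σ τ : Equiv.Perm (Fin m),
        permMat n m σ * (antisymmetriser n m * ρ * antisymmetriser n m) *
            (permMat n m τ)ᴴ
          = (cC σ * cC τ) • (antisymmetriser n m * ρ * antisymmetriser n m) := by
      intro σ τ
      rw [permMat_conjTranspose]
      have ha : permMat n m σ * (antisymmetriser n m * ρ * antisymmetriser n m) *
            permMat n m τ⁻¹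
          = (permMat n m σ * antisymmetriser n m) * ρ *
              (antisymmetriser n m * permMat n m τ⁻¹) := by
        simp only [Matrix.mul_assoc]
      rw [ha, permMat_mul_anti, anti_mul_permMat, cC_inv]
      simp only [Matrix.smul_mul, Matrix.mul_smul, smul_smul]
      congr 1
      ring
    rw [h, show ((Equiv.Perm.sign πl : ℤ) : ℂ) = cC πl from rfl,
      show ((Equiv.Perm.sign πr : ℤ) : ℂ) = cC πr from rfl,
      key πr πl, key πl πr, ← add_smul, smul_smul, smul_smul]
    have h1 := cC_sq πl
    have h2 := cC_sq πr
    have hd : cC πl * cC πr * 2⁻¹ * (cC πr * cC πl + cC πl * cC πr) = 1 := by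
      calc cC πl * cC πr * 2⁻¹ * (cC πr * cC πl + cC πl * cC πr)
          = (cC πl * cC πl) * (cC πr * cC πr) * (2⁻¹ * 2) := by ring
        _ = 1 := by rw [h1, h2]; norm_num
    rw [hd, one_smul]
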